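/- Let a, b, c be integers with gcd(b,c) = 1, and let e be the largest positive divisor of a that is coprime to c (i.e., e = max{ n ∈ ℕ : n ∣ a and gcd(n,c) = 1 }, for a ≠ 0). Let u be an integer with c·u ≡ 1 (mod e). Then gcd(a, c·(1 + b·u) − b) = 1. -/

import Mathlib

theorem gcd_eq_one_of_modular_inverse (a b c : ℤ) (ha : a ≠ 0)
    (hbc : Int.gcd b c = 1) (e : ℕ)
    (he_pos : 0 < e) (he_dvd : (e : ℤ) ∣ a) (he_cop : Nat.gcd e c.natAbs = 1)
    (he_max : ∀ n : ℕ, 0 < n → (n : ℤ) ∣ a → Nat.gcd n c.natAbs = 1 → n ≤ e)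
    (u : ℤ) (hu : (e : ℤ) ∣ c * u - 1) :
    Int.gcd a (c * (1 + b * u) - b) = 1 := by
  by_contra hg
  set g := Int.gcd a (c * (1 + b * u) - b) with hgdef
  have hg0 : g ≠ 0 := by
    intro h
    rw [Int.gcd_eq_zero_iff] at h
    exact ha h.1
  have hp : (g.minFac).Prime := Nat.minFac_prime hg
  set p := g.minFac with hpdef
  have hpg : (p : ℤ) ∣ (g : ℤ) := Int.natCast_dvd_natCast.mpr (Nat.minFac_dvd g)
  have hpa : (p : ℤ) ∣ a := hpg.trans (Int.gcd_dvd_left _ _)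
  have hpy : (p : ℤ) ∣ c * (1 + b * u) - b := hpg.trans (Int.gcd_dvd_right _ _)
  have hy : c * (1 + b * u) - b = c + b * (c * u - 1) := by ring
  rw [hy] at hpy
  by_cases hpc : (p : ℤ) ∣ c
  · have hpbm : (p : ℤ) ∣ b * (c * u - 1) := by
      have := dvd_sub hpy hpc
      simpa using this
    have hpb : (p : ℤ) ∣ b := by
      rcases (Int.Prime.dvd_mul' hp hpbm) with h | h
      · exact h
      · exfalso
        have h1 : (p : ℤ) ∣ 1 := by
          have := dvd_sub (hpc.mul_right u) h
          simpa using this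
        have := Int.le_of_dvd one_pos h1
        have := hp.two_le
        omega
    have h1 : (p : ℤ) ∣ (Int.gcd b c : ℤ) := Int.dvd_coe_gcd hpb hpc
    rw [hbc] at h1
    have := Int.le_of_dvd one_pos h1
    have := hp.two_le
    omega
  · have hpe : p ∣ e := by
      by_contra hpe
      have hcop : Nat.Coprime p e := (hp.coprime_iff_not_dvd).mpr hpe
      have h1 : e ∣ a.natAbs := Int.natCast_dvd.mp he_dvd
      have h2 : p ∣ a.natAbs := Int.natCast_dvd.mp hpa
      have hdvd : e * p ∣ a.natAbs :=
        Nat.Coprime.mul_dvd_of_dvd_of_dvd hcop.symm h1 h2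
      have hpc' : ¬ p ∣ c.natAbs := fun h => hpc (Int.natCast_dvd.mpr h)
      have hcopc : Nat.Coprime (e * p) c.natAbs :=
        Nat.Coprime.mul he_cop ((hp.coprime_iff_not_dvd).mpr hpc')
      have hle := he_max (e * p) (Nat.mul_pos he_pos hp.pos)
        (Int.natCast_dvd.mpr hdvd) hcopc
      have := hp.two_le
      nlinarith
    have hd1 : (p : ℤ) ∣ c * u - 1 := (Int.natCast_dvd_natCast.mpr hpe).trans hu
    have : (p : ℤ) ∣ c := by
      have := dvd_sub hpy (hd1.mul_left b)
      simpa using this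
    exact hpc this
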